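/- (3D-consistency of the discrete potential KdV equation.) Let u, u₁₀₀, u₀₁₀, u₀₀₁ ∈ ℂ and a, b, c ∈ ℂ, and define u₁₁₀ = u + (a − b)/(u₀₁₀ − u₁₀₀), u₁₀₁ = u + (a − c)/(u₀₀₁ − u₁₀₀), u₀₁₁ = u + (b − c)/(u₀₀₁ − u₀₁₀), assuming u₀₁₀ ≠ u₁₀₀, u₀₀₁ ≠ u₁₀₀, u₀₀₁ ≠ u₀₁₀. Assume further that u₀₁₁ ≠ u₁₀₁, u₀₁₁ ≠ u₁₁₀, u₁₀₁ ≠ u₁₁₀, and that (a − b) u₀₀₁ + (b − c) u₁₀₀ + (c − a) u₀₁₀ ≠ 0. Then the three values u₀₀₁ + (a − b)/(u₀₁₁ − u₁₀₁), u₀₁₀ + (a − c)/(u₀₁₁ − u₁₁₀), and u₁₀₀ + (b − c)/(u₁₀₁ − u₁₁₀) are all equal, and their common value is u₁₁₁ = −[(a − b) u₁₀₀ u₀₁₀ + (b − c) u₀₁₀ u₀₀₁ + (c − a) u₁₀₀ u₀₀₁] / [(a − b) u₀₀₁ + (b − c) u₁₀₀ + (c − a) u₀₁₀]. -/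

import Mathlib

/-- 3D-consistency of the discrete potential KdV equation: with
`u₁₁₀ = u + (a−b)/(u₀₁₀−u₁₀₀)`, `u₁₀₁ = u + (a−c)/(u₀₀₁−u₁₀₀)`,
`u₀₁₁ = u + (b−c)/(u₀₀₁−u₀₁₀)`, the three ways of computing `u₁₁₁` agree and
give the symmetric rational expression. -/
theorem stmt_16 (u u₁₀₀ u₀₁₀ u₀₀₁ a b c : ℂ)
    (h1 : u₀₁₀ ≠ u₁₀₀) (h2 : u₀₀₁ ≠ u₁₀₀) (h3 : u₀₀₁ ≠ u₀₁₀)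
    (h4 : u + (b - c) / (u₀₀₁ - u₀₁₀) ≠ u + (a - c) / (u₀₀₁ - u₁₀₀))
    (h5 : u + (b - c) / (u₀₀₁ - u₀₁₀) ≠ u + (a - b) / (u₀₁₀ - u₁₀₀))
    (h6 : u + (a - c) / (u₀₀₁ - u₁₀₀) ≠ u + (a - b) / (u₀₁₀ - u₁₀₀))
    (h7 : (a - b) * u₀₀₁ + (b - c) * u₁₀₀ + (c - a) * u₀₁₀ ≠ 0) :
    u₀₀₁ + (a - b) /
        ((u + (b - c) / (u₀₀₁ - u₀₁₀)) - (u + (a - c) / (u₀₀₁ - u₁₀₀)))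
      = -((a - b) * u₁₀₀ * u₀₁₀ + (b - c) * u₀₁₀ * u₀₀₁ + (c - a) * u₁₀₀ * u₀₀₁) /
          ((a - b) * u₀₀₁ + (b - c) * u₁₀₀ + (c - a) * u₀₁₀) ∧
    u₀₁₀ + (a - c) /
        ((u + (b - c) / (u₀₀₁ - u₀₁₀)) - (u + (a - b) / (u₀₁₀ - u₁₀₀)))
      = -((a - b) * u₁₀₀ * u₀₁₀ + (b - c) * u₀₁₀ * u₀₀₁ + (c - a) * u₁₀₀ * u₀₀₁) /
          ((a - b) * u₀₀₁ + (b - c) * u₁₀₀ + (c - a) * u₀₁₀) ∧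
    u₁₀₀ + (b - c) /
        ((u + (a - c) / (u₀₀₁ - u₁₀₀)) - (u + (a - b) / (u₀₁₀ - u₁₀₀)))
      = -((a - b) * u₁₀₀ * u₀₁₀ + (b - c) * u₀₁₀ * u₀₀₁ + (c - a) * u₁₀₀ * u₀₀₁) /
          ((a - b) * u₀₀₁ + (b - c) * u₁₀₀ + (c - a) * u₀₁₀) := by

  have d1 : u₀₁₀ - u₁₀₀ ≠ 0 := sub_ne_zero.mpr h1
  have d2 : u₀₀₁ - u₁₀₀ ≠ 0 := sub_ne_zero.mpr h2
  have d3 : u₀₀₁ - u₀₁₀ ≠ 0 := sub_ne_zero.mpr h3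
  have e4 : (b - c) / (u₀₀₁ - u₀₁₀) - (a - c) / (u₀₀₁ - u₁₀₀) ≠ 0 := by
    intro h; apply h4; have := sub_eq_zero.mp h; rw [this]
  have e5 : (b - c) / (u₀₀₁ - u₀₁₀) - (a - b) / (u₀₁₀ - u₁₀₀) ≠ 0 := by
    intro h; apply h5; have := sub_eq_zero.mp h; rw [this]
  have e6 : (a - c) / (u₀₀₁ - u₁₀₀) - (a - b) / (u₀₁₀ - u₁₀₀) ≠ 0 := by
    intro h; apply h6; have := sub_eq_zero.mp h; rw [this]
  refine ⟨?_, ?_, ?_⟩ <;>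
    rw [add_sub_add_left_eq_sub] <;>
    field_simp at e4 e5 e6 ⊢ <;>
    [skip; skip; skip]
  · have n4 : (b - c) * (u₀₀₁ - u₁₀₀) - (u₀₀₁ - u₀₁₀) * (a - c) ≠ 0 := fun h => e4 (by rw [h, zero_div])
    rw [add_div' _ _ _ n4, eq_neg_iff_add_eq_zero, div_add_div _ _ n4 ?_, div_eq_zero_iff]
    · left; ring
    · intro h; apply h7; linear_combination h
  · have n5 : (b - c) * (u₀₁₀ - u₁₀₀) - (u₀₀₁ - u₀₁₀) * (a - b) ≠ 0 := fun h => e5 (by rw [h, zero_div])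
    rw [add_div' _ _ _ n5, eq_neg_iff_add_eq_zero, div_add_div _ _ n5 ?_, div_eq_zero_iff]
    · left; ring
    · intro h; apply h7; linear_combination h
  · have n6 : (a - c) * (u₀₁₀ - u₁₀₀) - (u₀₀₁ - u₁₀₀) * (a - b) ≠ 0 := fun h => e6 (by rw [h, zero_div])
    rw [add_div' _ _ _ n6, eq_neg_iff_add_eq_zero, div_add_div _ _ n6 ?_, div_eq_zero_iff]
    · left; ring
    · intro h; apply h7; linear_combination h
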